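/- Every countable field k admits an injective group homomorphism k^× ↪ ℂ^× of its multiplicative group into the nonzero complex numbers. -/

import Mathlib

open Cardinal

lemma auxEquivComplex (L : Type) [Field L] [CharZero L] (hL : #L = Cardinal.continuum) :
    Nonempty (AlgebraicClosure L ≃+* ℂ) := by
  haveI : CharZero (AlgebraicClosure L) :=
    charZero_of_injective_algebraMap (algebraMap L (AlgebraicClosure L)).injective
  have h1 : #(AlgebraicClosure L) = Cardinal.continuum := by
    apply le_antisymm
    · refine (Algebra.IsAlgebraic.cardinalMk_le_max L (AlgebraicClosure L)).trans ?_
      rw [hL]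
      simp [aleph0_le_continuum]
    · rw [← hL]
      exact Cardinal.mk_le_of_injective (algebraMap L (AlgebraicClosure L)).injective
  exact IsAlgClosed.ringEquiv_of_equiv_of_charZero
    (by rw [h1]; exact Cardinal.aleph0_lt_continuum) (Cardinal.eq.1 (by rw [h1, mk_complex]))

lemma auxMonoidHom (k : Type) [Field k] [Countable k] :
    ∃ φ : k →* ℂ, Function.Injective φ := by
  rcases CharP.char_is_prime_or_zero k (ringChar k) with hp | h0
  · -- characteristic p
    haveI : Fact (Nat.Prime (ringChar k)) := ⟨hp⟩
    set p := ringChar k with hpdef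
    haveI : CharP k p := ringChar.charP k
    haveI hWzero : CharZero (WittVector p (ZMod p)) :=
      charZero_of_injective_ringHom
        (f := ((WittVector.equiv p).symm : ℤ_[p] →+* WittVector p (ZMod p)))
        (WittVector.equiv p).symm.injective
    haveI : CharZero (WittVector p k) :=
      charZero_of_injective_ringHom
        (f := WittVector.map (p := p) (ZMod.castHom (dvd_refl p) k))
        (WittVector.map_injective _ (ZMod.castHom (dvd_refl p) k).injective)
    set L := FractionRing (WittVector p k) with hLdef
    haveI : CharZero L :=
      charZero_of_injective_algebraMap (IsFractionRing.injective (WittVector p k) L)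
    have hW : #(WittVector p k) = Cardinal.continuum := by
      have e : WittVector p k ≃ (ℕ → k) :=
        ⟨fun x => x.coeff, WittVector.mk p, fun x => rfl, fun x => rfl⟩
      rw [Cardinal.mk_congr e, ← Cardinal.power_def]
      apply le_antisymm
      · calc #k ^ (#ℕ) ≤ ℵ₀ ^ (ℵ₀ : Cardinal) := by
              rw [Cardinal.mk_nat]
              exact Cardinal.power_le_power_right (Cardinal.mk_le_aleph0)
          _ = 2 ^ (ℵ₀ : Cardinal) := Cardinal.power_self_eq le_rfl
          _ = Cardinal.continuum := Cardinal.two_power_aleph0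
      · calc Cardinal.continuum = 2 ^ (ℵ₀ : Cardinal) := Cardinal.two_power_aleph0.symm
          _ ≤ #k ^ (#ℕ) := by
              rw [Cardinal.mk_nat]
              exact Cardinal.power_le_power_right
                (Cardinal.two_le_iff.2 ⟨0, 1, zero_ne_one⟩)
    have hL : #L = Cardinal.continuum := by
      rw [hLdef, Cardinal.mk_fractionRing, hW]
    obtain ⟨e2⟩ := auxEquivComplex L hL
    let bigring : WittVector p k →+* ℂ :=
      e2.toRingHom.comp ((algebraMap L (AlgebraicClosure L)).comp
        (algebraMap (WittVector p k) L))
    have hbig : Function.Injective bigring := by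
      refine e2.injective.comp ((algebraMap L (AlgebraicClosure L)).injective.comp ?_)
      exact IsFractionRing.injective (WittVector p k) L
    have hteich : Function.Injective (WittVector.teichmuller p : k →* WittVector p k) := by
      intro a b h
      have := congrArg (fun x => WittVector.coeff x 0) h
      simpa [WittVector.teichmuller_coeff_zero] using this
    exact ⟨bigring.toMonoidHom.comp (WittVector.teichmuller p), hbig.comp hteich⟩
  · -- characteristic zero
    haveI : CharP k 0 := h0 ▸ ringChar.charP k
    haveI : CharZero k := CharP.charP_to_charZero k
    haveI : CharZero (MvPolynomial ℝ k) :=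
      charZero_of_injective_ringHom
        (f := (MvPolynomial.C : k →+* MvPolynomial ℝ k)) (MvPolynomial.C_injective ℝ k)
    set L := FractionRing (MvPolynomial ℝ k) with hLdef
    haveI : CharZero L :=
      charZero_of_injective_algebraMap (IsFractionRing.injective (MvPolynomial ℝ k) L)
    have hL : #L = Cardinal.continuum := by
      rw [hLdef, Cardinal.mk_fractionRing, MvPolynomial.cardinalMk_eq_max, Cardinal.mk_real]
      apply le_antisymm
      · simp [Cardinal.mk_le_aleph0.trans aleph0_le_continuum, aleph0_le_continuum]
      · exact le_max_of_le_left (le_max_right _ _)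
    obtain ⟨e2⟩ := auxEquivComplex L hL
    let f : k →+* ℂ :=
      e2.toRingHom.comp ((algebraMap L (AlgebraicClosure L)).comp
        ((algebraMap (MvPolynomial ℝ k) L).comp (MvPolynomial.C)))
    exact ⟨f.toMonoidHom, f.injective⟩

theorem stmt1 (k : Type*) [Field k] [Countable k] :
    ∃ χ : kˣ →* ℂˣ, Function.Injective χ := by
  haveI := Countable.toSmall.{0} k
  haveI : Countable (Shrink.{0} k) := (equivShrink k).symm.injective.countable
  obtain ⟨φ, hφ⟩ := auxMonoidHom (Shrink.{0} k)
  let e : k ≃+* Shrink.{0} k := (Shrink.ringEquiv k).symm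
  let ψ : k →* ℂ := φ.comp (e : k →+* Shrink.{0} k).toMonoidHom
  have hψ : Function.Injective ψ := hφ.comp e.injective
  exact ⟨Units.map ψ, Units.map_injective hψ⟩
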